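/- Every unit u > 1 of a real quadratic field with norm -1 satisfies u ≥ (1+√5)/2. -/
import Mathlib

/-- Every unit `u > 1` of a real quadratic field with norm `-1` (an irrational real root of
`x² - t·x - 1`, `t ∈ ℤ`) satisfies `u ≥ (1+√5)/2`. -/
theorem norm_neg_one_unit_lower_bound (u : ℝ) (t : ℤ)
    (hmin : u ^ 2 - (t : ℝ) * u - 1 = 0) (hirr : Irrational u) (h1 : 1 < u) :
    (1 + Real.sqrt 5) / 2 ≤ u := by
  have hu : (0:ℝ) < u := by linarith
  have ht : (0:ℝ) < t := by nlinarith
  have ht1 : (1:ℤ) ≤ t := by exact_mod_cast Int.cast_pos.mp ht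
  have ht1' : (1:ℝ) ≤ t := by exact_mod_cast ht1
  have key : u ^ 2 - u - 1 ≥ 0 := by nlinarith
  have h5 : Real.sqrt 5 ≤ 2 * u - 1 := by
    have : Real.sqrt 5 ≤ Real.sqrt ((2 * u - 1) ^ 2) := by
      apply Real.sqrt_le_sqrt; nlinarith
    rwa [Real.sqrt_sq (by linarith)] at this
  linarith
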